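/- Let M ⊆ B(H) be a von Neumann algebra with cyclic and separating unit vector Ω, U : G → U(H) a unitary representation with U_g Ω = Ω and U_g M U_g* = M for all g, and let χ : G → 𝕋 be a group homomorphism into the circle. Then M_χ Ω is dense in H_χ, where M_χ = {a ∈ M : U_g a U_g* = χ(g)a for all g} and H_χ = {x ∈ H : U_g x = χ(g)x for all g}. -/

import Mathlib

open Filter Topology

noncomputable section

/-- Conjugation of a bounded operator by a unitary (surjective linear isometry). -/
def conjAct {H : Type*} [NormedAddCommGroup H] [InnerProductSpace ℂ H]
    (u : H ≃ₗᵢ[ℂ] H) (a : H →L[ℂ] H) : H →L[ℂ] H :=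
  u.toLinearIsometry.toContinuousLinearMap ∘L a ∘L
    u.symm.toLinearIsometry.toContinuousLinearMap

namespace Aux13

section Real
open RealInnerProductSpace
variable {F : Type*} [NormedAddCommGroup F] [InnerProductSpace ℝ F]


open RealInnerProductSpace

variable {F : Type*} [NormedAddCommGroup F] [InnerProductSpace ℝ F]

lemma nearest_unique {K : Set F} (hK : Convex ℝ K) {x y₁ y₂ : F}
    (h₁ : y₁ ∈ K) (h₂ : y₂ ∈ K)
    (m₁ : ‖x - y₁‖ = ⨅ w : K, ‖x - w‖) (m₂ : ‖x - y₂‖ = ⨅ w : K, ‖x - w‖) :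
    y₁ = y₂ := by
  have c₁ := (norm_eq_iInf_iff_real_inner_le_zero hK h₁).mp m₁ y₂ h₂
  have c₂ := (norm_eq_iInf_iff_real_inner_le_zero hK h₂).mp m₂ y₁ h₁
  have key : ‖y₂ - y₁‖ ^ 2 ≤ 0 := by
    have h3 : ⟪x - y₁, y₂ - y₁⟫ + ⟪x - y₂, y₁ - y₂⟫ = ⟪y₂ - y₁, y₂ - y₁⟫ := by
      simp only [inner_sub_left, inner_sub_right]
      ring
    rw [← real_inner_self_eq_norm_sq, ← h3]
    linarith
  have h4 : ‖y₂ - y₁‖ = 0 := by nlinarith [norm_nonneg (y₂ - y₁)]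
  have := sub_eq_zero.mp (norm_eq_zero.mp h4)
  exact this.symm


end Real


variable {H : Type*} [NormedAddCommGroup H] [InnerProductSpace ℂ H]

lemma conjAct_apply (u : H ≃ₗᵢ[ℂ] H) (a : H →L[ℂ] H) (v : H) :
    conjAct u a v = u (a (u.symm v)) := rfl

lemma conjAct_symm_conjAct (u : H ≃ₗᵢ[ℂ] H) (a : H →L[ℂ] H) :
    conjAct u.symm (conjAct u a) = a := by
  ext v
  simp [conjAct_apply]

lemma norm_conjAct_le (u : H ≃ₗᵢ[ℂ] H) (a : H →L[ℂ] H) : ‖conjAct u a‖ ≤ ‖a‖ := by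
  refine ContinuousLinearMap.opNorm_le_bound _ (norm_nonneg a) fun v => ?_
  rw [conjAct_apply, u.norm_map]
  calc ‖a (u.symm v)‖ ≤ ‖a‖ * ‖u.symm v‖ := a.le_opNorm _
    _ = ‖a‖ * ‖v‖ := by rw [u.symm.norm_map]

lemma norm_conjAct (u : H ≃ₗᵢ[ℂ] H) (a : H →L[ℂ] H) : ‖conjAct u a‖ = ‖a‖ := by
  refine le_antisymm (norm_conjAct_le u a) ?_
  conv_lhs => rw [← conjAct_symm_conjAct u a]
  exact norm_conjAct_le _ _

lemma conjAct_smul (u : H ≃ₗᵢ[ℂ] H) (c : ℂ) (a : H →L[ℂ] H) :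
    conjAct u (c • a) = c • conjAct u a := by
  ext v
  simp [conjAct_apply]

lemma conjAct_sub (u : H ≃ₗᵢ[ℂ] H) (a b : H →L[ℂ] H) :
    conjAct u (a - b) = conjAct u a - conjAct u b := by
  ext v
  simp [conjAct_apply]




variable {H : Type*} [NormedAddCommGroup H] [InnerProductSpace ℂ H] [CompleteSpace H]

lemma commutant_orbit_dense (M : VonNeumannAlgebra H) (Ω : H)
    (hsep : ∀ a ∈ M, a Ω = 0 → a = 0) :
    Dense ((fun c : H →L[ℂ] H => c Ω) '' (M.commutant : Set (H →L[ℂ] H))) := by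
  classical
  set ev : (H →L[ℂ] H) →ₗ[ℂ] H :=
    { toFun := fun a => a Ω
      map_add' := fun a b => rfl
      map_smul' := fun c a => rfl } with hev
  set W : Submodule ℂ H :=
    Submodule.map ev (Subalgebra.toSubmodule M.commutant.toStarSubalgebra.toSubalgebra) with hW
  have hWset : (W : Set H) = (fun c : H →L[ℂ] H => c Ω) '' (M.commutant : Set (H →L[ℂ] H)) := rfl
  set F := W.topologicalClosure with hF
  haveI : CompleteSpace F := (Submodule.isClosed_topologicalClosure W).completeSpace_coe
  set Q : H →L[ℂ] H := F.subtypeL ∘L F.orthogonalProjectionOnto with hQ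
  have hQmem : ∀ v, Q v ∈ F := fun v => (F.orthogonalProjectionOnto v).2
  have hWF : ∀ w ∈ W, w ∈ F := fun w hw => Submodule.le_topologicalClosure W hw
  -- each c in the commutant maps F into F
  have hinv : ∀ c ∈ M.commutant, ∀ w ∈ F, c w ∈ F := by
    intro c hc w hw
    have hcW : c '' (W : Set H) ⊆ (W : Set H) := by
      rw [hWset]
      rintro - ⟨-, ⟨d, hd, rfl⟩, rfl⟩
      exact ⟨c * d, mul_mem (show c ∈ M.commutant from hc) (show d ∈ M.commutant from hd), rfl⟩
    have : c w ∈ closure (c '' (W : Set H)) := by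
      have : (F : Set H) = closure (W : Set H) := rfl
      exact image_closure_subset_closure_image c.continuous ⟨w, hw, rfl⟩
    have h2 := closure_mono hcW this
    rwa [show closure (W : Set H) = (F : Set H) from rfl] at h2
  -- Q commutes with the commutant
  have hQcomm : Q ∈ Set.centralizer (M.commutant : Set (H →L[ℂ] H)) := by
    rw [Set.mem_centralizer_iff]
    intro c hc
    ext v
    have h1 : c (Q v) ∈ F := hinv c hc _ (hQmem v)
    have h2 : ∀ w ∈ F, inner ℂ (c v - c (Q v)) w = (0 : ℂ) := by
      intro w hw
      have hstar : star c ∈ M.commutant := star_mem hc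
      have hsw : (star c) w ∈ F := hinv _ hstar w hw
      have horth : v - Q v ∈ Fᗮ := Submodule.sub_starProjection_mem_orthogonal (K := F) v
      have : inner ℂ (v - Q v) ((star c) w) = (0 : ℂ) :=
        (Submodule.mem_orthogonal' F (v - Q v)).mp horth _ hsw
      calc inner ℂ (c v - c (Q v)) w = inner ℂ (c (v - Q v)) w := by rw [map_sub]
        _ = inner ℂ (v - Q v) ((ContinuousLinearMap.adjoint c) w) := by
            rw [ContinuousLinearMap.adjoint_inner_right]
        _ = inner ℂ (v - Q v) ((star c) w) := by rw [ContinuousLinearMap.star_eq_adjoint]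
        _ = 0 := this
    have := Submodule.eq_starProjection_of_mem_of_inner_eq_zero (K := F) (u := c v) h1 h2
    exact this.symm
  have hQM : Q ∈ M := by
    rw [← SetLike.mem_coe, ← M.centralizer_centralizer]
    rw [VonNeumannAlgebra.coe_commutant] at hQcomm
    exact hQcomm
  have hΩF : Ω ∈ F := by
    refine hWF Ω ?_
    have : Ω ∈ (W : Set H) := by
      rw [hWset]
      exact ⟨1, one_mem M.commutant, ContinuousLinearMap.one_apply Ω⟩
    exact this
  have hQΩ : Q Ω = Ω := by
    show F.starProjection Ω = Ω
    exact Submodule.starProjection_eq_self_iff.mpr hΩF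
  have hQ1 : (1 : H →L[ℂ] H) - Q = 0 := by
    refine hsep _ (sub_mem (one_mem M) hQM) ?_
    simp [ContinuousLinearMap.sub_apply, hQΩ]
  have hQeq : ∀ v : H, Q v = v := by
    intro v
    have : (1 : H →L[ℂ] H) v - Q v = 0 := by
      rw [← ContinuousLinearMap.sub_apply, hQ1]; rfl
    simpa using (sub_eq_zero.mp this).symm
  rw [Dense]
  intro v
  rw [← hWset]
  have : v ∈ F := hQeq v ▸ hQmem v
  exact this


variable {H : Type*} [NormedAddCommGroup H] [InnerProductSpace ℂ H] [CompleteSpace H]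

lemma exists_limit_op (M : VonNeumannAlgebra H) (Ω : H)
    (hsep : ∀ a ∈ M, a Ω = 0 → a = 0)
    (r : ℝ) (b : ℕ → H →L[ℂ] H) (hbM : ∀ n, b n ∈ M) (hbr : ∀ n, ‖b n‖ ≤ r)
    (y : H) (hby : Tendsto (fun n => b n Ω) atTop (𝓝 y)) :
    ∃ B, B ∈ M ∧ B Ω = y ∧ ∀ v, Tendsto (fun n => b n v) atTop (𝓝 (B v)) := by
  classical
  have hr : 0 ≤ r := le_trans (norm_nonneg (b 0)) (hbr 0)
  have hdense := commutant_orbit_dense M Ω hsep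
  have hΩcau : CauchySeq (fun n => b n Ω) := hby.cauchySeq
  -- each (b n v) is Cauchy
  have hcau : ∀ v : H, CauchySeq (fun n => b n v) := by
    intro v
    rw [Metric.cauchySeq_iff]
    intro ε hε
    obtain ⟨w, hw, hvw⟩ := Metric.mem_closure_iff.mp (hdense.closure_eq ▸ Set.mem_univ v)
      (ε / (4 * (r + 1))) (by positivity)
    obtain ⟨c, hc, rfl⟩ := hw
    obtain ⟨N, hN⟩ := Metric.cauchySeq_iff.mp hΩcau (ε / (2 * (‖c‖ + 1))) (by positivity)
    refine ⟨N, fun m hm n hn => ?_⟩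
    have hcomm : ∀ k : ℕ, b k (c Ω) = c (b k Ω) := by
      intro k
      have hc' : ∀ g ∈ M, g * c = c * g := by
        have h := hc
        rw [VonNeumannAlgebra.coe_commutant] at h
        exact fun g hg => Set.mem_centralizer_iff.mp h g hg
      have := hc' (b k) (hbM k)
      calc b k (c Ω) = (b k * c) Ω := rfl
        _ = (c * b k) Ω := by rw [this]
        _ = c (b k Ω) := rfl
    have key : ‖b m v - b n v‖ ≤ ‖b m (v - c Ω)‖ + ‖b n (v - c Ω)‖ + ‖c (b m Ω - b n Ω)‖ := by
      have : b m v - b n v = b m (v - c Ω) - b n (v - c Ω) + c (b m Ω - b n Ω) := by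
        simp only [map_sub, hcomm]
        abel
      rw [this]
      calc ‖b m (v - c Ω) - b n (v - c Ω) + c (b m Ω - b n Ω)‖
          ≤ ‖b m (v - c Ω) - b n (v - c Ω)‖ + ‖c (b m Ω - b n Ω)‖ := norm_add_le _ _
        _ ≤ ‖b m (v - c Ω)‖ + ‖b n (v - c Ω)‖ + ‖c (b m Ω - b n Ω)‖ := by
            have := norm_sub_le (b m (v - c Ω)) (b n (v - c Ω))
            linarith
    have h1 : ∀ k, ‖b k (v - c Ω)‖ ≤ r * (ε / (4 * (r + 1))) := by
      intro k
      calc ‖b k (v - c Ω)‖ ≤ ‖b k‖ * ‖v - c Ω‖ := (b k).le_opNorm _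
        _ ≤ r * (ε / (4 * (r + 1))) := by
            apply mul_le_mul (hbr k) _ (norm_nonneg _) hr
            rw [← dist_eq_norm]
            exact le_of_lt hvw
    have h2 : ‖c (b m Ω - b n Ω)‖ ≤ ‖c‖ * (ε / (2 * (‖c‖ + 1))) := by
      calc ‖c (b m Ω - b n Ω)‖ ≤ ‖c‖ * ‖b m Ω - b n Ω‖ := c.le_opNorm _
        _ ≤ ‖c‖ * (ε / (2 * (‖c‖ + 1))) := by
            apply mul_le_mul_of_nonneg_left _ (norm_nonneg c)
            rw [← dist_eq_norm]
            exact le_of_lt (hN m hm n hn)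
    rw [dist_eq_norm]
    have hr1 : r * (ε / (4 * (r + 1))) < ε / 4 := by
      have hne : r + 1 ≠ 0 := by linarith
      have h5 : r / (r + 1) < 1 := by
        rw [div_lt_one (by linarith)]; linarith
      calc r * (ε / (4 * (r + 1))) = (r / (r + 1)) * (ε / 4) := by
            field_simp
        _ < 1 * (ε / 4) := mul_lt_mul_of_pos_right h5 (by positivity)
        _ = ε / 4 := one_mul _
    have hc1 : ‖c‖ * (ε / (2 * (‖c‖ + 1))) < ε / 2 := by
      have : ‖c‖ / (‖c‖ + 1) < 1 := by
        rw [div_lt_one (by positivity)]; linarith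
      have hne : ‖c‖ + 1 ≠ 0 := by positivity
      calc ‖c‖ * (ε / (2 * (‖c‖ + 1))) = (‖c‖ / (‖c‖ + 1)) * (ε / 2) := by
            field_simp
        _ < 1 * (ε / 2) := by
            apply mul_lt_mul_of_pos_right this (by positivity)
        _ = ε / 2 := one_mul _
    calc ‖b m v - b n v‖ ≤ ‖b m (v - c Ω)‖ + ‖b n (v - c Ω)‖ + ‖c (b m Ω - b n Ω)‖ := key
      _ ≤ r * (ε / (4 * (r + 1))) + r * (ε / (4 * (r + 1))) + ‖c‖ * (ε / (2 * (‖c‖ + 1))) := by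
          have := h1 m; have := h1 n; linarith
      _ < ε / 4 + ε / 4 + ε / 2 := by linarith
      _ = ε := by ring
  choose f hf using fun v => cauchySeq_tendsto_of_complete (hcau v)
  have hadd : ∀ v w : H, f (v + w) = f v + f w := by
    intro v w
    refine tendsto_nhds_unique ?_ ((hf v).add (hf w))
    have : (fun n => b n (v + w)) = fun n => b n v + b n w := by
      funext n; rw [map_add]
    rw [← this]
    exact hf (v + w)
  have hsmul : ∀ (z : ℂ) (v : H), f (z • v) = z • f v := by
    intro z v
    refine tendsto_nhds_unique ?_ ((hf v).const_smul z)
    have : (fun n => b n (z • v)) = fun n => z • b n v := by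
      funext n; rw [map_smul]
    rw [← this]
    exact hf (z • v)
  have hbound : ∀ v, ‖f v‖ ≤ r * ‖v‖ := by
    intro v
    refine le_of_tendsto (hf v).norm (Eventually.of_forall fun n => ?_)
    calc ‖b n v‖ ≤ ‖b n‖ * ‖v‖ := (b n).le_opNorm v
      _ ≤ r * ‖v‖ := mul_le_mul_of_nonneg_right (hbr n) (norm_nonneg v)
  set B : H →L[ℂ] H :=
    LinearMap.mkContinuous
      { toFun := f
        map_add' := hadd
        map_smul' := hsmul } r hbound with hB
  have hBapp : ∀ v, B v = f v := fun v => rfl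
  refine ⟨B, ?_, ?_, ?_⟩
  · rw [← SetLike.mem_coe, ← M.centralizer_centralizer, Set.mem_centralizer_iff]
    intro c hc
    rw [Set.mem_centralizer_iff] at hc
    ext v
    show c (B v) = B (c v)
    rw [hBapp, hBapp]
    refine tendsto_nhds_unique ?_ (hf (c v))
    have : (fun n => b n (c v)) = fun n => c (b n v) := by
      funext n
      have := hc (b n) (hbM n)
      calc b n (c v) = (b n * c) v := rfl
        _ = (c * b n) v := by rw [this]
        _ = c (b n v) := rfl
    rw [this]
    exact (c.continuous.tendsto _).comp (hf v)
  · rw [hBapp]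
    exact tendsto_nhds_unique (hf Ω) hby
  · intro v
    rw [hBapp]
    exact hf v

lemma smul_mem' (M : VonNeumannAlgebra H) (c : ℂ) {x : H →L[ℂ] H} (hx : x ∈ M) :
    c • x ∈ M := by
  rw [Algebra.smul_def]
  exact mul_mem (show algebraMap ℂ (H →L[ℂ] H) c ∈ M from M.toStarSubalgebra.algebraMap_mem c) hx


end Aux13


theorem eigenoperator_vectors_dense_in_eigenspace
    {H : Type*} [NormedAddCommGroup H] [InnerProductSpace ℂ H] [CompleteSpace H]
    {G : Type*} [Group G]
    (M : VonNeumannAlgebra H) (Ω : H) (hΩ : ‖Ω‖ = 1)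
    (hcyc : Dense ((fun a : H →L[ℂ] H => a Ω) '' (M : Set (H →L[ℂ] H))))
    (hsep : ∀ a ∈ M, a Ω = 0 → a = 0)
    (U : G →* (H ≃ₗᵢ[ℂ] H)) (hUΩ : ∀ g, U g Ω = Ω)
    (hUM : ∀ g, conjAct (U g) '' (M : Set (H →L[ℂ] H)) = (M : Set (H →L[ℂ] H)))
    (χ : G → ℂ) (hχ1 : ∀ g, ‖χ g‖ = 1) (hχm : ∀ g h : G, χ (g * h) = χ g * χ h) :
    closure ((fun a : H →L[ℂ] H => a Ω) ''
        {a : H →L[ℂ] H | a ∈ M ∧ ∀ g, conjAct (U g) a = χ g • a})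
      = {x : H | ∀ g, U g x = χ g • x} := by
  classical
  letI : InnerProductSpace ℝ H := InnerProductSpace.complexToReal
  have hχ0 : ∀ g, χ g ≠ 0 := by
    intro g h
    have := hχ1 g
    rw [h, norm_zero] at this
    norm_num at this
  have hχone : χ 1 = 1 := by
    have h := hχm 1 1
    rw [mul_one] at h
    have h2 : χ 1 * χ 1 = χ 1 * 1 := by rw [mul_one]; exact h.symm
    exact mul_left_cancel₀ (hχ0 1) h2
  have hχinv : ∀ g : G, χ g⁻¹ = (χ g)⁻¹ := by
    intro g
    refine eq_inv_of_mul_eq_one_left ?_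
    rw [← hχm, inv_mul_cancel, hχone]
  have hUsymmΩ : ∀ g, (U g).symm Ω = Ω := fun g => (U g).symm_apply_eq.mpr (hUΩ g).symm
  have hconjΩ : ∀ (g : G) (a : H →L[ℂ] H), conjAct (U g) a Ω = U g (a Ω) := by
    intro g a
    show U g (a ((U g).symm Ω)) = U g (a Ω)
    rw [hUsymmΩ]
  have hUmul : ∀ (g h : G) (v : H), U (g * h) v = U g (U h v) := by
    intro g h v
    rw [map_mul]
    rfl
  have hclosed : IsClosed {x : H | ∀ g, U g x = χ g • x} := by
    have heq : {x : H | ∀ g, U g x = χ g • x} = ⋂ g, {x | U g x = χ g • x} := by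
      ext x; simp [Set.mem_iInter]
    rw [heq]
    exact isClosed_iInter fun g =>
      isClosed_eq (U g).continuous (continuous_const_smul (χ g))
  refine Set.Subset.antisymm ?_ ?_
  · refine closure_minimal ?_ hclosed
    rintro - ⟨a, ⟨haM, ha⟩, rfl⟩ g
    show U g (a Ω) = χ g • a Ω
    rw [← hconjΩ, ha g]
    rfl
  · intro x hx
    rw [Metric.mem_closure_iff]
    intro ε hε
    obtain ⟨w, hw, hxw⟩ := Metric.mem_closure_iff.mp (hcyc x) ε hε
    obtain ⟨a, haM, rfl⟩ := hw
    -- the twisted orbit of a Ω and its convex hull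
    set S : Set H := Set.range (fun g : G => (χ g)⁻¹ • U g (a Ω)) with hS
    set V : Set H := {w | ∃ b : H →L[ℂ] H, b ∈ M ∧ ‖b‖ ≤ ‖a‖ ∧ b Ω = w} with hV
    have hSV : S ⊆ V := by
      rintro - ⟨g, rfl⟩
      refine ⟨(χ g)⁻¹ • conjAct (U g) a, ?_, ?_, ?_⟩
      · refine Aux13.smul_mem' M _ ?_
        have : conjAct (U g) a ∈ conjAct (U g) '' (M : Set (H →L[ℂ] H)) :=
          ⟨a, haM, rfl⟩
        rw [hUM g] at this
        exact this
      · rw [norm_smul, norm_inv, hχ1, inv_one, one_mul, Aux13.norm_conjAct]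
      · rw [ContinuousLinearMap.smul_apply, hconjΩ]
    have hVconv : Convex ℝ V := by
      rintro - ⟨b₁, hb₁M, hb₁n, rfl⟩ - ⟨b₂, hb₂M, hb₂n, rfl⟩ s t hs ht hst
      refine ⟨(s : ℂ) • b₁ + (t : ℂ) • b₂, ?_, ?_, ?_⟩
      · exact add_mem (Aux13.smul_mem' M _ hb₁M) (Aux13.smul_mem' M _ hb₂M)
      · calc ‖(s : ℂ) • b₁ + (t : ℂ) • b₂‖
            ≤ ‖(s : ℂ) • b₁‖ + ‖(t : ℂ) • b₂‖ := norm_add_le _ _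
          _ = s * ‖b₁‖ + t * ‖b₂‖ := by
              rw [norm_smul, norm_smul, Complex.norm_real, Complex.norm_real,
                Real.norm_eq_abs, Real.norm_eq_abs, abs_of_nonneg hs, abs_of_nonneg ht]
          _ ≤ s * ‖a‖ + t * ‖a‖ := by
              have h1 := mul_le_mul_of_nonneg_left hb₁n hs
              have h2 := mul_le_mul_of_nonneg_left hb₂n ht
              linarith
          _ = ‖a‖ := by rw [← add_mul, hst, one_mul]
      · rw [ContinuousLinearMap.add_apply, ContinuousLinearMap.smul_apply,
          ContinuousLinearMap.smul_apply]
        norm_cast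
    set K : Set H := closure (convexHull ℝ S) with hK
    have hKconv : Convex ℝ K := (convex_convexHull ℝ S).closure
    have hKclosed : IsClosed K := isClosed_closure
    have hKV : K ⊆ closure V := closure_mono (convexHull_min hSV hVconv)
    -- the twisted unitaries
    set Tc : G → H →L[ℂ] H :=
      fun g => (χ g)⁻¹ • (U g).toLinearIsometry.toContinuousLinearMap with hTcdef
    have hTc : ∀ g v, Tc g v = (χ g)⁻¹ • U g v := fun g v => rfl
    have hTS : ∀ g, Tc g '' S ⊆ S := by
      rintro g - ⟨-, ⟨h, rfl⟩, rfl⟩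
      refine ⟨g * h, ?_⟩
      show (χ (g * h))⁻¹ • U (g * h) (a Ω) = Tc g ((χ h)⁻¹ • U h (a Ω))
      rw [hTc, LinearIsometryEquiv.map_smul, smul_smul, hχm, mul_inv, hUmul]
    have hTK : ∀ g, ∀ w ∈ K, Tc g w ∈ K := by
      intro g w hw
      have hlin : IsLinearMap ℝ (Tc g) :=
        ⟨fun u v => map_add _ u v, fun s v => (Tc g).map_smul_of_tower s v⟩
      have himg := hlin.image_convexHull S
      have h1 : Tc g w ∈ closure (Tc g '' convexHull ℝ S) :=
        image_closure_subset_closure_image (Tc g).continuous ⟨w, hw, rfl⟩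
      rw [himg] at h1
      refine closure_mono ?_ h1
      exact convexHull_min (Set.Subset.trans (hTS g) (subset_convexHull ℝ S))
        (convex_convexHull ℝ S)
    have hTx : ∀ g, Tc g x = x := by
      intro g
      rw [hTc, hx g, smul_smul, inv_mul_cancel₀ (hχ0 g), one_smul]
    have hTiso : ∀ (g : G) (v w : H), ‖Tc g v - Tc g w‖ = ‖v - w‖ := by
      intro g v w
      rw [← map_sub, hTc, norm_smul, norm_inv, hχ1, inv_one, one_mul,
        LinearIsometryEquiv.norm_map]
    have haΩS : a Ω ∈ S := by
      refine ⟨1, ?_⟩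
      show (χ (1 : G))⁻¹ • U 1 (a Ω) = a Ω
      rw [hχone, inv_one, one_smul, map_one]
      rfl
    have haΩK : a Ω ∈ K := subset_closure (subset_convexHull ℝ S haΩS)
    obtain ⟨y, hyK, hymin⟩ :=
      exists_norm_eq_iInf_of_complete_convex ⟨_, haΩK⟩ hKclosed.isComplete hKconv x
    have hbdd : BddBelow (Set.range fun w : K => ‖x - ↑w‖) := by
      refine ⟨0, ?_⟩
      rintro - ⟨w, rfl⟩
      exact norm_nonneg _
    have hyle : ‖x - y‖ ≤ ‖x - a Ω‖ :=
      le_trans (le_of_eq hymin) (ciInf_le hbdd (⟨a Ω, haΩK⟩ : K))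
    have hyfix : ∀ g, Tc g y = y := by
      intro g
      refine (Aux13.nearest_unique hKconv hyK (hTK g y hyK) hymin ?_).symm
      have heq2 : ‖x - Tc g y‖ = ‖x - y‖ := by
        conv_lhs => rw [← hTx g]
        exact hTiso g x y
      rw [heq2, hymin]
    have hyeig : ∀ g, U g y = χ g • y := by
      intro g
      have h := hyfix g
      rw [hTc] at h
      calc U g y = χ g • ((χ g)⁻¹ • U g y) := by
            rw [smul_smul, mul_inv_cancel₀ (hχ0 g), one_smul]
        _ = χ g • y := by rw [h]
    obtain ⟨v, hvV, hvy⟩ := mem_closure_iff_seq_limit.mp (hKV hyK)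
    choose bb hbbM hbbn hbbΩ using hvV
    obtain ⟨B, hBM, hBΩ, hBtend⟩ :=
      Aux13.exists_limit_op M Ω hsep ‖a‖ bb hbbM hbbn y
        (by
          have : (fun n => bb n Ω) = v := funext hbbΩ
          rw [this]
          exact hvy)
    have hBeig : ∀ g, conjAct (U g) B = χ g • B := by
      intro g
      have hmem : conjAct (U g) B ∈ M := by
        have : conjAct (U g) B ∈ conjAct (U g) '' (M : Set (H →L[ℂ] H)) := ⟨B, hBM, rfl⟩
        rw [hUM g] at this
        exact this
      have hd : conjAct (U g) B - χ g • B ∈ M :=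
        sub_mem hmem (Aux13.smul_mem' M _ hBM)
      have hz : (conjAct (U g) B - χ g • B) Ω = 0 := by
        rw [ContinuousLinearMap.sub_apply, hconjΩ, hBΩ, hyeig g,
          ContinuousLinearMap.smul_apply, hBΩ, sub_self]
      exact sub_eq_zero.mp (hsep _ hd hz)
    refine ⟨y, ⟨B, ⟨hBM, hBeig⟩, hBΩ⟩, ?_⟩
    rw [dist_eq_norm]
    refine lt_of_le_of_lt hyle ?_
    rw [← dist_eq_norm]
    exact hxw
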